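/- Let k be a positive integer and let X, Y be independent uniform random variables on [0,1). Then for t ∈ [0,1), the density of the random variable {k·X·Y} at t equals Σ_{j=0}^{k-1} (1/k)·ln(k/(j+t)); in particular this density is strictly decreasing in t on (0,1). -/

import Mathlib

open MeasureTheory Real Set

private lemma singleton_null (c : ℝ) : (volume.restrict (Set.Ico (0:ℝ) 1)) {c} = 0 :=
  le_antisymm ((Measure.restrict_le_self _).trans_eq Real.volume_singleton) zero_le

private lemma mI_prob : IsProbabilityMeasure (volume.restrict (Set.Ico (0:ℝ) 1)) := by
  constructor
  rw [Measure.restrict_apply MeasurableSet.univ, Set.univ_inter, Real.volume_Ico]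
  norm_num

private lemma ae_ne_zero : ∀ᵐ x ∂(volume.restrict (Set.Ico (0:ℝ) 1)), x ≠ (0:ℝ) := by
  rw [ae_iff]
  refine measure_mono_null (fun x hx => ?_) (singleton_null 0)
  simpa using hx

private lemma nullGraph (c : ℝ) :
    (volume.restrict (Set.Ico (0:ℝ) 1)).prod (volume.restrict (Set.Ico (0:ℝ) 1))
      {p : ℝ × ℝ | p.1 * p.2 = c} = 0 := by
  have hs : MeasurableSet {p : ℝ × ℝ | p.1 * p.2 = c} :=
    measurableSet_eq_fun (measurable_fst.mul measurable_snd) measurable_const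
  rw [Measure.prod_apply hs]
  have h : ∀ᵐ x ∂(volume.restrict (Set.Ico (0:ℝ) 1)),
      (volume.restrict (Set.Ico (0:ℝ) 1)) (Prod.mk x ⁻¹' {p : ℝ × ℝ | p.1 * p.2 = c}) = 0 := by
    filter_upwards [ae_ne_zero] with x hx
    refine measure_mono_null (fun y hy => ?_) (singleton_null (c / x))
    simp only [mem_preimage, mem_setOf_eq] at hy
    simp [eq_div_iff hx, mul_comm, hy]
  rw [lintegral_congr_ae h, lintegral_zero]

private lemma section_meas (c x : ℝ) (hx : 0 < x) :
    (volume.restrict (Set.Ico (0:ℝ) 1)) {y : ℝ | x * y ≤ c} = ENNReal.ofReal (min (c / x) 1) := by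
  have h1 : {y : ℝ | x * y ≤ c} = Iic (c / x) := by
    ext y; simp [mem_Iic, le_div_iff₀ hx, mul_comm]
  rw [h1, Measure.restrict_apply measurableSet_Iic]
  rcases lt_or_ge (c / x) 1 with h | h
  · have : Iic (c / x) ∩ Ico (0:ℝ) 1 = Icc 0 (c / x) := by
      ext y
      constructor
      · rintro ⟨hy1, hy2, _⟩; exact ⟨hy2, hy1⟩
      · rintro ⟨hy1, hy2⟩; exact ⟨hy2, hy1, lt_of_le_of_lt hy2 h⟩
    rw [this, Real.volume_Icc, min_eq_left h.le]
    ring_nf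
  · have : Iic (c / x) ∩ Ico (0:ℝ) 1 = Ico (0:ℝ) 1 := by
      ext y
      constructor
      · rintro ⟨_, hy⟩; exact hy
      · rintro ⟨hy1, hy2⟩; exact ⟨le_trans (le_of_lt hy2) h, hy1, hy2⟩
    rw [this, Real.volume_Ico, min_eq_right h]
    norm_num

private lemma gmin_integrable (c : ℝ) (hc : 0 ≤ c) {s : Set ℝ} (hs : MeasurableSet s)
    (hs0 : s ⊆ Ici (0:ℝ)) (hfin : volume s < ⊤) :
    IntegrableOn (fun x : ℝ => min (c / x) 1) s volume := by
  have hmeas : Measurable (fun x : ℝ => min (c / x) 1) :=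
    (measurable_const.div measurable_id).min measurable_const
  refine Integrable.mono' (g := fun _ => (1:ℝ)) ?_ hmeas.aestronglyMeasurable ?_
  · exact integrableOn_const hfin.ne
  · filter_upwards [ae_restrict_mem hs] with x hx
    have hx0 : (0:ℝ) ≤ x := hs0 hx
    have hnn : (0:ℝ) ≤ min (c / x) 1 := le_min (div_nonneg hc hx0) zero_le_one
    rw [Real.norm_eq_abs, abs_of_nonneg hnn]
    exact min_le_right _ _

private lemma gmin_integral (c : ℝ) (h0 : 0 ≤ c) (h1 : c ≤ 1) :
    ∫ x in Set.Ico (0:ℝ) 1, min (c / x) 1 = c - c * Real.log c := by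
  rcases eq_or_lt_of_le h0 with rfl | hc
  · simp
  · have hIcc : IntegrableOn (fun x : ℝ => min (c / x) 1) (Icc (0:ℝ) 1) volume :=
      gmin_integrable c h0 measurableSet_Icc (fun x hx => hx.1) (by simp [Real.volume_Icc])
    have hint1 : IntervalIntegrable (fun x : ℝ => min (c / x) 1) volume 0 c := by
      rw [intervalIntegrable_iff_integrableOn_Ioc_of_le h0]
      exact hIcc.mono_set (Ioc_subset_Icc_self.trans (Icc_subset_Icc le_rfl h1))
    have hint2 : IntervalIntegrable (fun x : ℝ => min (c / x) 1) volume c 1 := by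
      rw [intervalIntegrable_iff_integrableOn_Ioc_of_le h1]
      exact hIcc.mono_set ((Ioc_subset_Icc_self).trans (Icc_subset_Icc h0 le_rfl))
    have e0 : ∫ x in Set.Ico (0:ℝ) 1, min (c / x) 1 = ∫ x in (0:ℝ)..1, min (c / x) 1 := by
      rw [integral_Ico_eq_integral_Ioo, intervalIntegral.integral_of_le zero_le_one,
        integral_Ioc_eq_integral_Ioo]
    have e1 : ∫ x in (0:ℝ)..c, min (c / x) 1 = c := by
      rw [intervalIntegral.integral_of_le h0,
        setIntegral_congr_fun measurableSet_Ioc (g := fun _ => (1:ℝ)) ?_]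
      · simp [Real.volume_Ioc, h0]
      · intro x hx
        have hx0 : 0 < x := hx.1
        have : (1:ℝ) ≤ c / x := (le_div_iff₀ hx0).2 (by simpa using hx.2)
        simp [min_eq_right this]
    have e2 : ∫ x in c..(1:ℝ), min (c / x) 1 = -(c * Real.log c) := by
      have : ∫ x in c..(1:ℝ), min (c / x) 1 = ∫ x in c..(1:ℝ), c * (1 / x) := by
        rw [intervalIntegral.integral_of_le h1, intervalIntegral.integral_of_le h1]
        refine setIntegral_congr_fun measurableSet_Ioc (fun x hx => ?_)
        have hx0 : 0 < x := lt_of_lt_of_le hc hx.1.le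
        have : c / x ≤ 1 := (div_le_one hx0).2 hx.1.le
        rw [min_eq_left this]
        ring
      rw [this, intervalIntegral.integral_const_mul, integral_one_div ?_]
      · rw [Real.log_div one_ne_zero (ne_of_gt hc), Real.log_one]
        ring
      · intro h
        rw [Set.uIcc_of_le h1] at h
        exact absurd h.1 (not_le.2 hc)
    rw [e0, ← intervalIntegral.integral_add_adjacent_intervals hint1 hint2, e1, e2]
    ring

private lemma area (c : ℝ) (h0 : 0 ≤ c) (h1 : c ≤ 1) :
    (volume.restrict (Set.Ico (0:ℝ) 1)).prod (volume.restrict (Set.Ico (0:ℝ) 1))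
      {p : ℝ × ℝ | p.1 * p.2 ≤ c} = ENNReal.ofReal (c - c * Real.log c) := by
  have hs : MeasurableSet {p : ℝ × ℝ | p.1 * p.2 ≤ c} :=
    measurableSet_le (measurable_fst.mul measurable_snd) measurable_const
  rw [Measure.prod_apply hs]
  have hae : ∀ᵐ x ∂(volume.restrict (Set.Ico (0:ℝ) 1)),
      (volume.restrict (Set.Ico (0:ℝ) 1)) (Prod.mk x ⁻¹' {p : ℝ × ℝ | p.1 * p.2 ≤ c})
        = ENNReal.ofReal (min (c / x) 1) := by
    filter_upwards [ae_ne_zero, ae_restrict_mem measurableSet_Ico] with x hx hxI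
    have hxpos : 0 < x := lt_of_le_of_ne hxI.1 (Ne.symm hx)
    exact section_meas c x hxpos
  rw [lintegral_congr_ae hae,
    ← ofReal_integral_eq_lintegral_ofReal
      (gmin_integrable c h0 measurableSet_Ico (fun x hx => hx.1) (by simp [Real.volume_Ico]))
      ?_,
    gmin_integral c h0 h1]
  filter_upwards [ae_restrict_mem measurableSet_Ico] with x hx
  exact le_min (div_nonneg h0 hx.1) zero_le_one

open MeasureTheory Real Set

private lemma term_nonneg (k : ℕ) (hk : 0 < k) (j : ℕ) (hj : j < k) (t : ℝ)
    (ht0 : 0 ≤ t) (ht1 : t ≤ 1) : 0 ≤ (1 / (k:ℝ)) * Real.log ((k:ℝ) / ((j:ℝ) + t)) := by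
  have hk0 : (0:ℝ) < k := by exact_mod_cast hk
  rcases eq_or_lt_of_le (by positivity : (0:ℝ) ≤ (j:ℝ) + t) with h | h
  · rw [← h, div_zero, Real.log_zero, mul_zero]
  · have hjk : (j:ℝ) + t ≤ k := by
      have : (j:ℝ) + 1 ≤ k := by exact_mod_cast hj
      linarith
    have h2 : (1:ℝ) ≤ (k:ℝ) / ((j:ℝ) + t) := (one_le_div h).2 hjk
    exact mul_nonneg (by positivity) (Real.log_nonneg h2)

private lemma deriv_H (k : ℕ) (hk : 0 < k) (j : ℕ) (t : ℝ) (ht : 0 < (j:ℝ) + t) :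
    HasDerivAt (fun s : ℝ => ((j:ℝ)+s)/(k:ℝ) - (((j:ℝ)+s)/(k:ℝ)) * Real.log (((j:ℝ)+s)/(k:ℝ)))
      ((1 / (k:ℝ)) * Real.log ((k:ℝ) / ((j:ℝ) + t))) t := by
  have hk0 : (0:ℝ) < k := by exact_mod_cast hk
  have hc : ((j:ℝ)+t)/(k:ℝ) ≠ 0 := by positivity
  have hφ : HasDerivAt (fun s : ℝ => ((j:ℝ)+s)/(k:ℝ)) (1/(k:ℝ)) t := by
    simpa using ((hasDerivAt_id t).const_add (j:ℝ)).div_const (k:ℝ)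
  have hψ : HasDerivAt (fun c : ℝ => c - c * Real.log c)
      (1 - (Real.log (((j:ℝ)+t)/(k:ℝ)) + 1)) (((j:ℝ)+t)/(k:ℝ)) :=
    (hasDerivAt_id _).sub (hasDerivAt_mul_log hc)
  have := hψ.comp t hφ
  refine this.congr_deriv ?_
  rw [show (k:ℝ) / ((j:ℝ)+t) = (((j:ℝ)+t)/(k:ℝ))⁻¹ by rw [inv_div], Real.log_inv]
  ring

private lemma term_intervalIntegrable (k : ℕ) (hk : 0 < k) (j : ℕ) (hj : j < k) (a : ℝ)
    (h0 : 0 ≤ a) (h1 : a ≤ 1) :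
    IntervalIntegrable (fun t : ℝ => (1 / (k:ℝ)) * Real.log ((k:ℝ) / ((j:ℝ) + t))) volume 0 a := by
  rw [intervalIntegrable_iff_integrableOn_Ioc_of_le h0]
  refine intervalIntegral.integrableOn_deriv_of_nonneg (g := fun s : ℝ => ((j:ℝ)+s)/(k:ℝ) - (((j:ℝ)+s)/(k:ℝ)) * Real.log (((j:ℝ)+s)/(k:ℝ))) ?_ (fun t ht => ?_) (fun t ht => ?_)
  · have : Continuous (fun s : ℝ =>
        ((j:ℝ)+s)/(k:ℝ) - (((j:ℝ)+s)/(k:ℝ)) * Real.log (((j:ℝ)+s)/(k:ℝ))) := by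
      have h1 : Continuous (fun s : ℝ => ((j:ℝ)+s)/(k:ℝ)) := by continuity
      exact (continuous_id.sub continuous_mul_log).comp h1
    exact this.continuousOn
  · exact deriv_H k hk j t (by have := ht.1; positivity)
  · exact term_nonneg k hk j hj t ht.1.le (ht.2.le.trans h1)

private lemma term_integral (k : ℕ) (hk : 0 < k) (j : ℕ) (hj : j < k) (a : ℝ)
    (h0 : 0 ≤ a) (h1 : a ≤ 1) :
    ∫ t in (0:ℝ)..a, (1 / (k:ℝ)) * Real.log ((k:ℝ) / ((j:ℝ) + t))
      = (((j:ℝ)+a)/(k:ℝ) - (((j:ℝ)+a)/(k:ℝ)) * Real.log (((j:ℝ)+a)/(k:ℝ)))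
        - ((j:ℝ)/(k:ℝ) - ((j:ℝ)/(k:ℝ)) * Real.log ((j:ℝ)/(k:ℝ))) := by
  have hcont : Continuous (fun s : ℝ =>
      ((j:ℝ)+s)/(k:ℝ) - (((j:ℝ)+s)/(k:ℝ)) * Real.log (((j:ℝ)+s)/(k:ℝ))) := by
    have h1 : Continuous (fun s : ℝ => ((j:ℝ)+s)/(k:ℝ)) := by continuity
    exact (continuous_id.sub continuous_mul_log).comp h1
  have := intervalIntegral.integral_eq_sub_of_hasDerivAt_of_le h0 hcont.continuousOn
    (fun t ht => deriv_H k hk j t (by have := ht.1; positivity))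
    (term_intervalIntegrable k hk j hj a h0 h1)
  simpa using this

private lemma term_integral_nonneg (k : ℕ) (hk : 0 < k) (j : ℕ) (hj : j < k) (a : ℝ)
    (h0 : 0 ≤ a) (h1 : a ≤ 1) :
    0 ≤ (((j:ℝ)+a)/(k:ℝ) - (((j:ℝ)+a)/(k:ℝ)) * Real.log (((j:ℝ)+a)/(k:ℝ)))
        - ((j:ℝ)/(k:ℝ) - ((j:ℝ)/(k:ℝ)) * Real.log ((j:ℝ)/(k:ℝ))) := by
  rw [← term_integral k hk j hj a h0 h1]
  exact intervalIntegral.integral_nonneg h0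
    (fun t ht => term_nonneg k hk j hj t ht.1 (ht.2.trans h1))


private lemma H_nonneg (c : ℝ) (h0 : 0 ≤ c) (h1 : c ≤ 1) : 0 ≤ c - c * Real.log c := by
  have := Real.log_nonpos h0 h1
  nlinarith

private lemma areaLt (c : ℝ) (h0 : 0 ≤ c) (h1 : c ≤ 1) :
    (volume.restrict (Set.Ico (0:ℝ) 1)).prod (volume.restrict (Set.Ico (0:ℝ) 1))
      {p : ℝ × ℝ | p.1 * p.2 < c} = ENNReal.ofReal (c - c * Real.log c) := by
  have hset : {p : ℝ × ℝ | p.1 * p.2 < c}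
      = {p : ℝ × ℝ | p.1 * p.2 ≤ c} \ {p : ℝ × ℝ | p.1 * p.2 = c} := by
    ext p
    simp only [mem_setOf_eq, mem_diff]
    exact ⟨fun h => ⟨h.le, h.ne⟩, fun h => lt_of_le_of_ne h.1 h.2⟩
  rw [hset, measure_diff_null (nullGraph c), area c h0 h1]

private lemma main_Iic (k : ℕ) (hk : 0 < k) (a : ℝ) (h0 : 0 ≤ a) (h1 : a ≤ 1) :
    Measure.map (fun p : ℝ × ℝ => Int.fract ((k : ℝ) * p.1 * p.2))
        ((volume.restrict (Set.Ico (0 : ℝ) 1)).prod (volume.restrict (Set.Ico (0 : ℝ) 1)))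
        (Set.Iic a)
      = (volume.restrict (Set.Ico (0 : ℝ) 1)).withDensity
          (fun t => ENNReal.ofReal
            (∑ j ∈ Finset.range k, (1 / (k : ℝ)) * Real.log ((k : ℝ) / (j + t))))
          (Set.Iic a) := by
  have hk0 : (0:ℝ) < k := by exact_mod_cast hk
  set μ := volume.restrict (Set.Ico (0:ℝ) 1) with hμ
  set μ2 := μ.prod μ with hμ2
  haveI : IsProbabilityMeasure μ := mI_prob
  haveI : IsProbabilityMeasure μ2 := by rw [hμ2]; infer_instance
  have hf : Measurable (fun p : ℝ × ℝ => Int.fract ((k : ℝ) * p.1 * p.2)) :=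
    ((measurable_const.mul measurable_fst).mul measurable_snd).fract
  -- the pieces
  set U : ℕ → Set (ℝ × ℝ) := fun j =>
    {p : ℝ × ℝ | p.1 * p.2 ≤ ((j:ℝ)+a)/(k:ℝ)} \ {p : ℝ × ℝ | p.1 * p.2 < (j:ℝ)/(k:ℝ)} with hU
  have hUmeas : ∀ j, MeasurableSet (U j) := fun j =>
    (measurableSet_le (measurable_fst.mul measurable_snd) measurable_const).diff
      (measurableSet_lt (measurable_fst.mul measurable_snd) measurable_const)
  -- LHS computation
  rw [Measure.map_apply hf measurableSet_Iic]
  have hpre : (fun p : ℝ × ℝ => Int.fract ((k : ℝ) * p.1 * p.2)) ⁻¹' (Set.Iic a)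
      = {p : ℝ × ℝ | Int.fract ((k:ℝ) * p.1 * p.2) ≤ a} := rfl
  -- equality of traces on the square
  have hsq : ∀ p : ℝ × ℝ, p ∈ (Set.Ico (0:ℝ) 1) ×ˢ (Set.Ico (0:ℝ) 1) →
      (p ∈ {p : ℝ × ℝ | Int.fract ((k:ℝ) * p.1 * p.2) ≤ a} ↔ p ∈ ⋃ j ∈ Finset.range k, U j) := by
    rintro ⟨x, y⟩ ⟨⟨hx0, hx1⟩, ⟨hy0, hy1⟩⟩
    dsimp only at hx0 hx1 hy0 hy1
    have hu0 : 0 ≤ (k:ℝ) * x * y := by positivity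
    have huk : (k:ℝ) * x * y < k := by
      rcases eq_or_lt_of_le hx0 with h | h
      · rw [← h]; simpa using hk0
      · calc (k:ℝ) * x * y = (k:ℝ) * (x * y) := by ring
          _ < (k:ℝ) * 1 := by
            refine mul_lt_mul_of_pos_left ?_ hk0
            calc x * y ≤ x * 1 := by nlinarith
              _ < 1 := by linarith [mul_one x]
          _ = k := mul_one _
    constructor
    · intro hfr
      simp only [mem_setOf_eq] at hfr
      set u := (k:ℝ) * x * y
      have hfl0 : 0 ≤ ⌊u⌋ := Int.floor_nonneg.2 hu0
      set j : ℕ := ⌊u⌋.toNat with hj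
      have hjval : (j:ℝ) = (⌊u⌋ : ℝ) := by
        rw [hj]; exact_mod_cast Int.toNat_of_nonneg hfl0
      have hjk : j < k := by
        have : (⌊u⌋:ℝ) ≤ u := Int.floor_le u
        have : (j:ℝ) < k := by rw [hjval]; linarith [huk]
        exact_mod_cast this
      refine Set.mem_iUnion₂.2 ⟨j, Finset.mem_range.2 hjk, ?_, ?_⟩
      · show x * y ≤ ((j:ℝ)+a)/(k:ℝ)
        rw [le_div_iff₀ hk0]
        have : u - (⌊u⌋:ℝ) ≤ a := hfr
        have h2 : u ≤ (j:ℝ) + a := by rw [hjval]; linarith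
        calc x * y * k = u := by rw [show u = (k:ℝ)*x*y from rfl]; ring
          _ ≤ (j:ℝ) + a := h2
      · show ¬ (x * y < (j:ℝ)/(k:ℝ))
        rw [not_lt, div_le_iff₀ hk0]
        have : (⌊u⌋:ℝ) ≤ u := Int.floor_le u
        rw [hjval]
        calc (⌊u⌋:ℝ) ≤ u := this
          _ = x * y * k := by rw [show u = (k:ℝ)*x*y from rfl]; ring
    · intro hmem
      rcases Set.mem_iUnion₂.1 hmem with ⟨j, hjk, hUj⟩
      obtain ⟨hle, hnlt⟩ := hUj
      simp only [mem_setOf_eq] at hle hnlt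
      rw [not_lt, div_le_iff₀ hk0] at hnlt
      rw [le_div_iff₀ hk0] at hle
      set u := (k:ℝ) * x * y
      have hju : (j:ℝ) ≤ u := by
        calc (j:ℝ) ≤ x * y * k := hnlt
          _ = u := by rw [show u = (k:ℝ)*x*y from rfl]; ring
      have huja : u ≤ (j:ℝ) + a := by
        calc u = x * y * k := by rw [show u = (k:ℝ)*x*y from rfl]; ring
          _ ≤ (j:ℝ) + a := hle
      show Int.fract u ≤ a
      by_cases hcase : u < (j:ℝ) + 1
      · have hfl : ⌊u⌋ = (j:ℤ) := by
          rw [Int.floor_eq_iff]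
          refine ⟨by push_cast; exact hju, by push_cast; exact hcase⟩
        rw [Int.fract, hfl]
        push_cast
        linarith
      · have : (1:ℝ) ≤ a := by push_neg at hcase; linarith
        exact (Int.fract_lt_one u).le.trans this
  -- rewrite both sets through the restricted square
  have hμ2E : ∀ (E : Set (ℝ × ℝ)), MeasurableSet E →
      μ2 E = (volume.prod volume) (E ∩ (Set.Ico (0:ℝ) 1) ×ˢ (Set.Ico (0:ℝ) 1)) := by
    intro E hE
    rw [hμ2, hμ, Measure.prod_restrict, Measure.restrict_apply hE]
  have hEU : μ2 {p : ℝ × ℝ | Int.fract ((k:ℝ) * p.1 * p.2) ≤ a}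
      = μ2 (⋃ j ∈ Finset.range k, U j) := by
    rw [hμ2E _ (measurableSet_le (hf) measurable_const),
      hμ2E _ ((Finset.range k).measurableSet_biUnion (fun j _ => hUmeas j))]
    congr 1
    ext p
    simp only [Set.mem_inter_iff]
    exact ⟨fun ⟨h1, h2⟩ => ⟨(hsq p h2).1 h1, h2⟩, fun ⟨h1, h2⟩ => ⟨(hsq p h2).2 h1, h2⟩⟩
  rw [hpre, hEU]
  -- additivity
  have hdisj : Set.Pairwise ↑(Finset.range k) (Function.onFun (AEDisjoint μ2) U) := by
    have key : ∀ i j : ℕ, i < j → AEDisjoint μ2 (U i) (U j) := by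
      intro i j hij
      have hsub : U i ∩ U j ⊆ {p : ℝ × ℝ | p.1 * p.2 = (j:ℝ)/(k:ℝ)} := by
        rintro p ⟨⟨hi1, _⟩, ⟨_, hj2⟩⟩
        simp only [mem_setOf_eq] at *
        rw [not_lt] at hj2
        have hija : (i:ℝ) + a ≤ j := by
          have : (i:ℝ) + 1 ≤ j := by exact_mod_cast hij
          linarith
        have h5 : ((i:ℝ)+a)/(k:ℝ) ≤ (j:ℝ)/(k:ℝ) := by gcongr
        exact le_antisymm (hi1.trans h5) hj2
      exact measure_mono_null hsub (nullGraph _)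
    intro i hi j hj hij
    rcases hij.lt_or_gt with h | h
    · exact key i j h
    · exact (key j i h).symm
  rw [measure_biUnion_finset₀ hdisj (fun j _ => (hUmeas j).nullMeasurableSet)]
  -- each piece
  have hpiece : ∀ j ∈ Finset.range k,
      μ2 (U j) = ENNReal.ofReal
        ((((j:ℝ)+a)/(k:ℝ) - (((j:ℝ)+a)/(k:ℝ)) * Real.log (((j:ℝ)+a)/(k:ℝ)))
          - ((j:ℝ)/(k:ℝ) - ((j:ℝ)/(k:ℝ)) * Real.log ((j:ℝ)/(k:ℝ)))) := by
    intro j hjmem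
    have hjk : j < k := Finset.mem_range.1 hjmem
    have hjk' : (j:ℝ) + a ≤ k := by
      have : (j:ℝ) + 1 ≤ k := by exact_mod_cast hjk
      linarith
    have hc2a : (0:ℝ) ≤ ((j:ℝ)+a)/(k:ℝ) := by positivity
    have hc2b : ((j:ℝ)+a)/(k:ℝ) ≤ 1 := by
      rw [div_le_one hk0]; exact hjk'
    have hc1a : (0:ℝ) ≤ (j:ℝ)/(k:ℝ) := by positivity
    have hc1b : (j:ℝ)/(k:ℝ) ≤ 1 := by
      rw [div_le_one hk0]
      have : (j:ℝ) + 1 ≤ k := by exact_mod_cast hjk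
      linarith
    have hsub : {p : ℝ × ℝ | p.1 * p.2 < (j:ℝ)/(k:ℝ)}
        ⊆ {p : ℝ × ℝ | p.1 * p.2 ≤ ((j:ℝ)+a)/(k:ℝ)} := by
      intro p hp
      simp only [mem_setOf_eq] at *
      have h6 : (j:ℝ)/(k:ℝ) ≤ ((j:ℝ)+a)/(k:ℝ) := by gcongr; linarith
      exact hp.le.trans h6
    rw [hU]
    rw [measure_diff hsub
      (measurableSet_lt (measurable_fst.mul measurable_snd) measurable_const).nullMeasurableSet
      (measure_ne_top μ2 _)]
    rw [hμ2, hμ]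
    rw [area _ hc2a hc2b, areaLt _ hc1a hc1b,
      ← ENNReal.ofReal_sub _ (H_nonneg _ hc1a hc1b)]
  rw [Finset.sum_congr rfl hpiece]
  -- RHS computation
  rw [withDensity_apply _ measurableSet_Iic, hμ, Measure.restrict_restrict measurableSet_Iic]
  have haeq : (Set.Iic a ∩ Set.Ico (0:ℝ) 1 : Set ℝ) =ᵐ[volume] Set.Icc 0 a := by
    have hone : ∀ᵐ x : ℝ ∂volume, x ∉ ({1} : Set ℝ) :=
      measure_eq_zero_iff_ae_notMem.mp Real.volume_singleton
    rw [Filter.eventuallyEq_set]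
    filter_upwards [hone] with x hx
    simp only [Set.mem_singleton_iff] at hx
    constructor
    · rintro ⟨h1, h2, _⟩; exact ⟨h2, h1⟩
    · rintro ⟨hx0, hxa⟩
      exact ⟨hxa, hx0, lt_of_le_of_ne (hxa.trans h1) hx⟩
  rw [Measure.restrict_congr_set haeq]
  have hIntTerm : ∀ j ∈ Finset.range k,
      IntegrableOn (fun t : ℝ => (1 / (k:ℝ)) * Real.log ((k:ℝ) / ((j:ℝ) + t)))
        (Set.Ioc 0 a) volume := by
    intro j hjmem
    have := term_intervalIntegrable k hk j (Finset.mem_range.1 hjmem) a h0 h1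
    rwa [intervalIntegrable_iff_integrableOn_Ioc_of_le h0] at this
  have hInt : IntegrableOn
      (fun t : ℝ => ∑ j ∈ Finset.range k, (1 / (k:ℝ)) * Real.log ((k:ℝ) / ((j:ℝ) + t)))
      (Set.Icc 0 a) volume := by
    rw [integrableOn_Icc_iff_integrableOn_Ioc]
    exact integrable_finset_sum _ hIntTerm
  have hnn : 0 ≤ᵐ[volume.restrict (Set.Icc 0 a)]
      (fun t : ℝ => ∑ j ∈ Finset.range k, (1 / (k:ℝ)) * Real.log ((k:ℝ) / ((j:ℝ) + t))) := by
    filter_upwards [ae_restrict_mem measurableSet_Icc] with t ht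
    exact Finset.sum_nonneg fun j hjmem =>
      term_nonneg k hk j (Finset.mem_range.1 hjmem) t ht.1 (ht.2.trans h1)
  rw [← ofReal_integral_eq_lintegral_ofReal hInt hnn]
  have : ∫ t in Set.Icc (0:ℝ) a,
      (∑ j ∈ Finset.range k, (1 / (k:ℝ)) * Real.log ((k:ℝ) / ((j:ℝ) + t)))
      = ∑ j ∈ Finset.range k,
        ((((j:ℝ)+a)/(k:ℝ) - (((j:ℝ)+a)/(k:ℝ)) * Real.log (((j:ℝ)+a)/(k:ℝ)))
          - ((j:ℝ)/(k:ℝ) - ((j:ℝ)/(k:ℝ)) * Real.log ((j:ℝ)/(k:ℝ)))) := by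
    rw [integral_Icc_eq_integral_Ioc, ← intervalIntegral.integral_of_le h0,
      intervalIntegral.integral_finset_sum
        (fun j hjmem => term_intervalIntegrable k hk j (Finset.mem_range.1 hjmem) a h0 h1)]
    exact Finset.sum_congr rfl fun j hjmem =>
      term_integral k hk j (Finset.mem_range.1 hjmem) a h0 h1
  rw [this, ENNReal.ofReal_sum_of_nonneg fun j hjmem =>
    term_integral_nonneg k hk j (Finset.mem_range.1 hjmem) a h0 h1]

/-- The law of `{k·X·Y}` for independent uniform `X, Y` on `[0,1)` has density
`t ↦ ∑_{j=0}^{k-1} (1/k)·log(k/(j+t))` with respect to Lebesgue measure on `[0,1)`,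
and this density is strictly decreasing on `(0,1)`. -/
theorem density_fract_mul_uniform (k : ℕ) (hk : 0 < k) :
    Measure.map (fun p : ℝ × ℝ => Int.fract ((k : ℝ) * p.1 * p.2))
        ((volume.restrict (Set.Ico (0 : ℝ) 1)).prod (volume.restrict (Set.Ico (0 : ℝ) 1)))
      = (volume.restrict (Set.Ico (0 : ℝ) 1)).withDensity
          (fun t => ENNReal.ofReal
            (∑ j ∈ Finset.range k, (1 / (k : ℝ)) * Real.log ((k : ℝ) / (j + t))))
    ∧ StrictAntiOn
        (fun t : ℝ => ∑ j ∈ Finset.range k, (1 / (k : ℝ)) * Real.log ((k : ℝ) / (j + t)))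
        (Set.Ioo (0 : ℝ) 1) := by
  have hk0 : (0:ℝ) < k := by exact_mod_cast hk
  constructor
  · haveI : IsProbabilityMeasure (volume.restrict (Set.Ico (0:ℝ) 1)) := mI_prob
    have hf : Measurable (fun p : ℝ × ℝ => Int.fract ((k : ℝ) * p.1 * p.2)) :=
      ((measurable_const.mul measurable_fst).mul measurable_snd).fract
    haveI : IsProbabilityMeasure
        (Measure.map (fun p : ℝ × ℝ => Int.fract ((k : ℝ) * p.1 * p.2))
          ((volume.restrict (Set.Ico (0 : ℝ) 1)).prod (volume.restrict (Set.Ico (0 : ℝ) 1)))) :=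
      Measure.isProbabilityMeasure_map hf.aemeasurable
    refine Measure.ext_of_Iic _ _ (fun a => ?_)
    rcases lt_or_ge a 0 with ha | ha
    · -- both sides zero
      rw [Measure.map_apply hf measurableSet_Iic]
      have hempty : (fun p : ℝ × ℝ => Int.fract ((k : ℝ) * p.1 * p.2)) ⁻¹' Set.Iic a = ∅ := by
        ext p
        simp only [Set.mem_preimage, Set.mem_Iic, Set.mem_empty_iff_false, iff_false, not_le]
        exact lt_of_lt_of_le ha (Int.fract_nonneg _)
      rw [hempty, measure_empty, withDensity_apply _ measurableSet_Iic,
        Measure.restrict_restrict measurableSet_Iic]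
      have h2 : (Set.Iic a ∩ Set.Ico (0:ℝ) 1 : Set ℝ) = ∅ := by
        apply Set.eq_empty_of_forall_notMem
        intro x hx
        exact absurd (hx.1.trans_lt ha) (not_lt.2 hx.2.1)
      rw [h2, Measure.restrict_empty, lintegral_zero_measure]
    rcases le_or_gt a 1 with ha1 | ha1
    · exact main_Iic k hk a ha ha1
    · -- a > 1 : reduce to a = 1
      have hpre : (fun p : ℝ × ℝ => Int.fract ((k : ℝ) * p.1 * p.2)) ⁻¹' Set.Iic a
          = (fun p : ℝ × ℝ => Int.fract ((k : ℝ) * p.1 * p.2)) ⁻¹' Set.Iic 1 := by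
        ext p
        simp only [Set.mem_preimage, Set.mem_Iic]
        exact ⟨fun _ => (Int.fract_lt_one _).le, fun _ => (Int.fract_lt_one _).le.trans ha1.le⟩
      have hset : (Set.Iic a ∩ Set.Ico (0:ℝ) 1 : Set ℝ) = Set.Iic 1 ∩ Set.Ico (0:ℝ) 1 := by
        ext x
        simp only [Set.mem_inter_iff, Set.mem_Iic, Set.mem_Ico]
        constructor
        · rintro ⟨_, hx2, hx3⟩; exact ⟨hx3.le, hx2, hx3⟩
        · rintro ⟨_, hx2, hx3⟩; exact ⟨hx3.le.trans ha1.le, hx2, hx3⟩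
      rw [Measure.map_apply hf measurableSet_Iic, hpre, ← Measure.map_apply hf measurableSet_Iic,
        main_Iic k hk 1 zero_le_one le_rfl, withDensity_apply _ measurableSet_Iic,
        withDensity_apply _ measurableSet_Iic, Measure.restrict_restrict measurableSet_Iic,
        Measure.restrict_restrict measurableSet_Iic, hset]
  · -- strict antitonicity
    intro s hs t ht hst
    refine Finset.sum_lt_sum_of_nonempty (Finset.nonempty_range_iff.2 hk.ne') (fun j _ => ?_)
    have hjs : (0:ℝ) < (j:ℝ) + s := by have := hs.1; positivity
    have hjt : (0:ℝ) < (j:ℝ) + t := by linarith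
    refine mul_lt_mul_of_pos_left ?_ (by positivity)
    refine Real.log_lt_log (by positivity) ?_
    exact div_lt_div_of_pos_left hk0 hjs (by linarith)
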